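/- Let f, g : 2^[n] → ℕ be monotone decreasing functions (i.e., A ⊆ B implies f(B) ≤ f(A) and g(B) ≤ g(A)) with ∑_{X ⊆ [n]} f(X) ≤ ∑_{X ⊆ [n]} g(X). Then there exists a function p : 2^[n] × 2^[n] → ℕ such that: (i) p(X,Y) ≠ 0 only if X ∩ Y = ∅; (ii) ∑_{X,Y ⊆ [n]} p(X,Y) = ∑_{X ⊆ [n]} f(X); (iii) for every Y ⊆ [n] one has ∑_{X ⊆ [n]} p(X,Y) ≤ g(Y), and for every X ⊆ [n] one has ∑_{Y ⊆ [n]} p(X,Y) = f(X). -/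

import Mathlib

open Finset

/-- Layer-cake decomposition of a sum of an `ℕ`-valued function over a finset. -/
lemma aux_layer {n : ℕ} (D : Finset (Finset (Fin n))) (h : Finset (Fin n) → ℕ) (M : ℕ)
    (hM : ∀ Y, h Y ≤ M) :
    ∑ Y ∈ D, h Y = ∑ k ∈ Finset.range M, #(D.filter fun Y => k < h Y) := by
  simp_rw [Finset.card_filter]
  rw [Finset.sum_comm]
  refine Finset.sum_congr rfl fun Y _ => ?_
  have : ∀ k, (if k < h Y then 1 else 0) = if k ∈ Finset.range (h Y) then 1 else 0 := by
    intro k; simp [Finset.mem_range]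
  simp_rw [this]
  rw [Finset.sum_ite_mem, Finset.inter_eq_right.mpr (Finset.range_subset.mpr (fun x hx => Finset.mem_range.mpr (lt_of_lt_of_le hx (hM Y))))]
  simp

lemma aux_filter_inter {n : ℕ} (D : Finset (Finset (Fin n))) (P : Finset (Fin n) → Prop)
    [DecidablePred P] : D.filter P = D ∩ Finset.univ.filter P := by
  ext Y; simp [Finset.mem_filter]

/-- Harris inequality for a lower set `D` and a decreasing function `g`. -/
lemma aux_harris_dec {n : ℕ} (g : Finset (Fin n) → ℕ)
    (hg : ∀ A B : Finset (Fin n), A ⊆ B → g B ≤ g A)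
    (D : Finset (Finset (Fin n))) (hD : IsLowerSet (D : Set (Finset (Fin n)))) :
    #D * ∑ Y : Finset (Fin n), g Y ≤ 2 ^ n * ∑ Y ∈ D, g Y := by
  rw [aux_layer D g (g ∅) (fun Y => hg ∅ Y (Finset.empty_subset Y)),
      aux_layer Finset.univ g (g ∅) (fun Y => hg ∅ Y (Finset.empty_subset Y)),
      Finset.mul_sum, Finset.mul_sum]
  refine Finset.sum_le_sum fun k _ => ?_
  rw [aux_filter_inter D]
  have hL : IsLowerSet ((Finset.univ.filter fun Y => k < g Y : Finset (Finset (Fin n))) :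
      Set (Finset (Fin n))) := by
    intro A B hBA hA
    simp only [Finset.coe_filter, Set.mem_setOf_eq, Finset.mem_univ, true_and] at *
    exact lt_of_lt_of_le hA (hg B A hBA)
  have := hD.le_card_inter_finset hL
  simpa [Fintype.card_fin] using this

/-- Harris inequality for a lower set `D` and an increasing function `h`. -/
lemma aux_harris_inc {n : ℕ} (h : Finset (Fin n) → ℕ) (M : ℕ) (hM : ∀ Y, h Y ≤ M)
    (hmono : ∀ A B : Finset (Fin n), A ⊆ B → h A ≤ h B)
    (D : Finset (Finset (Fin n))) (hD : IsLowerSet (D : Set (Finset (Fin n)))) :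
    2 ^ n * ∑ Y ∈ D, h Y ≤ #D * ∑ Y : Finset (Fin n), h Y := by
  rw [aux_layer D h M hM, aux_layer Finset.univ h M hM, Finset.mul_sum, Finset.mul_sum]
  refine Finset.sum_le_sum fun k _ => ?_
  rw [aux_filter_inter D]
  have hU : IsUpperSet ((Finset.univ.filter fun Y => k < h Y : Finset (Finset (Fin n))) :
      Set (Finset (Fin n))) := by
    intro A B hAB hA
    simp only [Finset.coe_filter, Set.mem_setOf_eq, Finset.mem_univ, true_and] at *
    exact lt_of_lt_of_le hA (hmono A B hAB)
  have := hD.card_inter_le_finset hU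
  simpa [Fintype.card_fin] using this

/-- On a lower set `D`, the sum of `f ∘ compl` is at most the sum of `g`. -/
lemma aux_key {n : ℕ} (f g : Finset (Fin n) → ℕ)
    (hf : ∀ A B : Finset (Fin n), A ⊆ B → f B ≤ f A)
    (hg : ∀ A B : Finset (Fin n), A ⊆ B → g B ≤ g A)
    (hsum : ∑ X : Finset (Fin n), f X ≤ ∑ X : Finset (Fin n), g X)
    (D : Finset (Finset (Fin n))) (hD : IsLowerSet (D : Set (Finset (Fin n)))) :
    ∑ Y ∈ D, f Yᶜ ≤ ∑ Y ∈ D, g Y := by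
  have hcompl : ∑ Y : Finset (Fin n), f Yᶜ = ∑ X : Finset (Fin n), f X :=
    Fintype.sum_bijective compl compl_involutive.bijective _ _ (fun Y => rfl)
  have hmono : ∀ A B : Finset (Fin n), A ⊆ B → f Aᶜ ≤ f Bᶜ := fun A B hAB =>
    hf Bᶜ Aᶜ (Finset.compl_subset_compl.mpr hAB)
  have h1 := aux_harris_inc (fun Y => f Yᶜ) (f ∅) (fun Y => hf ∅ Yᶜ (Finset.empty_subset _))
    hmono D hD
  have h2 := aux_harris_dec g hg D hD
  have h3 : #D * ∑ Y : Finset (Fin n), f Yᶜ ≤ #D * ∑ Y : Finset (Fin n), g Y := by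
    rw [hcompl]; exact Nat.mul_le_mul_left _ hsum
  have : 2 ^ n * ∑ Y ∈ D, f Yᶜ ≤ 2 ^ n * ∑ Y ∈ D, g Y := le_trans h1 (le_trans h3 h2)
  exact Nat.le_of_mul_le_mul_left this (by positivity)

/-- Hall-type condition for the weighted disjointness matching. -/
lemma aux_hall {n : ℕ} (f g : Finset (Fin n) → ℕ)
    (hf : ∀ A B : Finset (Fin n), A ⊆ B → f B ≤ f A)
    (hg : ∀ A B : Finset (Fin n), A ⊆ B → g B ≤ g A)
    (hsum : ∑ X : Finset (Fin n), f X ≤ ∑ X : Finset (Fin n), g X)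
    (T : Finset (Finset (Fin n))) :
    ∑ X ∈ T, f X ≤ ∑ Y ∈ Finset.univ.filter (fun Y => ∃ X ∈ T, X ∩ Y = ∅), g Y := by
  set N := Finset.univ.filter (fun Y => ∃ X ∈ T, X ∩ Y = ∅) with hN
  have hD : IsLowerSet (N : Set (Finset (Fin n))) := by
    intro A B hBA hA
    simp only [hN, Finset.coe_filter, Set.mem_setOf_eq, Finset.mem_univ, true_and] at *
    obtain ⟨X, hX, hXA⟩ := hA
    exact ⟨X, hX, Finset.subset_empty.mp (hXA ▸ Finset.inter_subset_inter_left hBA)⟩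
  have himg : T.image compl ⊆ N := by
    intro Y hY
    simp only [Finset.mem_image] at hY
    obtain ⟨X, hX, rfl⟩ := hY
    simp only [hN, Finset.mem_filter, Finset.mem_univ, true_and]
    exact ⟨X, hX, by simp⟩
  calc ∑ X ∈ T, f X = ∑ Y ∈ T.image compl, f Yᶜ := by
        rw [Finset.sum_image (fun a _ b _ h => compl_injective h)]
        exact Finset.sum_congr rfl fun X _ => by rw [compl_compl]
    _ ≤ ∑ Y ∈ N, f Yᶜ := Finset.sum_le_sum_of_subset himg
    _ ≤ ∑ Y ∈ N, g Y := aux_key f g hf hg hsum N hD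

/-- Weighted matching version: given monotone decreasing `f g : 2^[n] → ℕ` with
`|f| ≤ |g|`, there is a weighted matching `p` supported on pairs of disjoint
sets with `|p| = |f|`, column sums at most `g` and row sums equal to `f`. -/
theorem stmt_4 (n : ℕ) (f g : Finset (Fin n) → ℕ)
    (hf : ∀ A B : Finset (Fin n), A ⊆ B → f B ≤ f A)
    (hg : ∀ A B : Finset (Fin n), A ⊆ B → g B ≤ g A)
    (hsum : ∑ X : Finset (Fin n), f X ≤ ∑ X : Finset (Fin n), g X) :
    ∃ p : Finset (Fin n) → Finset (Fin n) → ℕ,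
      (∀ X Y : Finset (Fin n), p X Y ≠ 0 → X ∩ Y = ∅) ∧
      (∑ X : Finset (Fin n), ∑ Y : Finset (Fin n), p X Y = ∑ X : Finset (Fin n), f X) ∧
      (∀ Y : Finset (Fin n), ∑ X : Finset (Fin n), p X Y ≤ g Y) ∧
      (∀ X : Finset (Fin n), ∑ Y : Finset (Fin n), p X Y = f X) := by
  classical
  let t : (Σ X : Finset (Fin n), Fin (f X)) → Finset (Σ Y : Finset (Fin n), Fin (g Y)) :=
    fun xi => Finset.univ.filter (fun yj => xi.1 ∩ yj.1 = ∅)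
  -- Hall condition
  have hall : ∀ s : Finset (Σ X : Finset (Fin n), Fin (f X)), #s ≤ #(s.biUnion t) := by
    intro s
    have h1 : #s ≤ ∑ X ∈ s.image Sigma.fst, f X := by
      have hsub : s ⊆ (s.image Sigma.fst).sigma
          (fun X => (Finset.univ : Finset (Fin (f X)))) := by
        intro xi hxi
        rw [Finset.mem_sigma]
        exact ⟨Finset.mem_image_of_mem _ hxi, Finset.mem_univ _⟩
      calc #s ≤ #((s.image Sigma.fst).sigma fun X => (Finset.univ : Finset (Fin (f X)))) :=
            Finset.card_le_card hsub
        _ = ∑ X ∈ s.image Sigma.fst, f X := by rw [Finset.card_sigma]; simp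
    have h2 : s.biUnion t =
        (Finset.univ.filter (fun Y => ∃ X ∈ s.image Sigma.fst, X ∩ Y = ∅)).sigma
          (fun Y => (Finset.univ : Finset (Fin (g Y)))) := by
      ext yj
      constructor
      · intro hm
        obtain ⟨xi, hxi, hmem⟩ := Finset.mem_biUnion.mp hm
        rw [Finset.mem_sigma]
        exact ⟨Finset.mem_filter.mpr ⟨Finset.mem_univ _,
          ⟨xi.1, Finset.mem_image_of_mem _ hxi, (Finset.mem_filter.mp hmem).2⟩⟩,
          Finset.mem_univ _⟩
      · intro hm
        obtain ⟨hm1, -⟩ := Finset.mem_sigma.mp hm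
        obtain ⟨-, X, hXT, hX⟩ := Finset.mem_filter.mp hm1
        obtain ⟨xi, hxi, rfl⟩ := Finset.mem_image.mp hXT
        exact Finset.mem_biUnion.mpr ⟨xi, hxi, Finset.mem_filter.mpr ⟨Finset.mem_univ _, hX⟩⟩
    rw [h2, Finset.card_sigma]
    simp only [Finset.card_univ, Fintype.card_fin]
    exact le_trans h1 (aux_hall f g hf hg hsum (s.image Sigma.fst))
  obtain ⟨F, hFinj, hFmem⟩ := (Finset.all_card_le_biUnion_card_iff_exists_injective t).mp hall
  have hFd : ∀ xi : Σ X : Finset (Fin n), Fin (f X), xi.1 ∩ (F xi).1 = ∅ := by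
    intro xi
    have := hFmem xi
    simp only [t, Finset.mem_filter] at this
    exact this.2
  refine ⟨fun X Y => #(Finset.univ.filter (fun i : Fin (f X) => (F ⟨X, i⟩).1 = Y)), ?_, ?_, ?_, ?_⟩
  · intro X Y hne
    obtain ⟨i, hi⟩ := Finset.card_pos.mp (Nat.pos_of_ne_zero hne)
    simp only [Finset.mem_filter] at hi
    have := hFd ⟨X, i⟩
    rwa [hi.2] at this
  · refine Finset.sum_congr rfl fun X _ => ?_
    rw [← Finset.card_eq_sum_card_fiberwise (f := fun i : Fin (f X) => (F ⟨X, i⟩).1)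
      (fun i _ => Finset.mem_univ _)]
    simp
  · intro Y
    have hAcard : #(Finset.univ.sigma
        (fun X => Finset.univ.filter (fun i : Fin (f X) => (F ⟨X, i⟩).1 = Y))) =
        ∑ X : Finset (Fin n), #(Finset.univ.filter
        (fun i : Fin (f X) => (F ⟨X, i⟩).1 = Y)) := Finset.card_sigma _ _
    rw [← hAcard]
    have hB : #(Finset.univ.filter (fun yj : Σ Y : Finset (Fin n), Fin (g Y) => yj.1 = Y))
        = g Y := by
      have he : (Finset.univ.filter (fun yj : Σ Y : Finset (Fin n), Fin (g Y) => yj.1 = Y)) =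
          ({Y} : Finset (Finset (Fin n))).sigma
            (fun Y => (Finset.univ : Finset (Fin (g Y)))) := by
        ext yj
        rw [Finset.mem_sigma, Finset.mem_filter, Finset.mem_singleton]
        simp
      rw [he, Finset.card_sigma]
      simp
    rw [← hB]
    refine Finset.card_le_card_of_injOn F ?_ (Function.Injective.injOn hFinj)
    intro xi hxi
    have h2' := (Finset.mem_sigma.mp hxi).2
    have h3 : (F ⟨xi.1, xi.2⟩).1 = Y := (Finset.mem_filter.mp h2').2
    exact Finset.mem_filter.mpr ⟨Finset.mem_univ _, (Sigma.eta xi) ▸ h3⟩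
  · intro X
    rw [← Finset.card_eq_sum_card_fiberwise (f := fun i : Fin (f X) => (F ⟨X, i⟩).1)
      (fun i _ => Finset.mem_univ _)]
    simp
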